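/- The dimension over ℚ of ker(γ) equals the number of connected components of Γ that are in equilibrium. -/

import Mathlib

/-- The defining property of the incidence matrix of a multiquiver: every row has
at most one positive and at most one negative entry. -/
def CondM {V E : Type*} (γ : E → V → ℤ) : Prop :=
  ∀ e : E, (∀ v w : V, 0 < γ e v → 0 < γ e w → v = w) ∧
    (∀ v w : V, γ e v < 0 → γ e w < 0 → v = w)

/-- Two vertices are adjacent if they are distinct and some edge is incident to
both of them. -/
def MQAdj {V E : Type*} (γ : E → V → ℤ) (v w : V) : Prop :=
  v ≠ w ∧ ∃ e : E, γ e v ≠ 0 ∧ γ e w ≠ 0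

/-- The multiquiver is connected if any two vertices are related by the
reflexive–transitive closure of adjacency. -/
def MQConnected {V E : Type*} (γ : E → V → ℤ) : Prop :=
  ∀ v w : V, Relation.ReflTransGen (MQAdj γ) v w

/-- The kernel of the incidence matrix `γ`, as a `ℚ`-subspace of `V → ℚ`:
`{d | ∀ e, Σ_v γ e v · d v = 0}`. -/
def kerGamma {V E : Type*} [Fintype V] (γ : E → V → ℤ) : Submodule ℚ (V → ℚ) where
  carrier := {d | ∀ e : E, ∑ v : V, (γ e v : ℚ) * d v = 0}
  add_mem' := by
    intro a b ha hb e
    have : ∑ v : V, (γ e v : ℚ) * (a v + b v)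
        = (∑ v : V, (γ e v : ℚ) * a v) + ∑ v : V, (γ e v : ℚ) * b v := by
      rw [← Finset.sum_add_distrib]
      exact Finset.sum_congr rfl fun v _ => by ring
    simpa [this] using by rw [ha e, hb e, add_zero]
  zero_mem' := by intro e; simp
  smul_mem' := by
    intro c a ha e
    have : ∑ v : V, (γ e v : ℚ) * (c * a v) = c * ∑ v : V, (γ e v : ℚ) * a v := by
      rw [Finset.mul_sum]
      exact Finset.sum_congr rfl fun v _ => by ring
    simp only [Pi.smul_apply, smul_eq_mul]
    rw [this, ha e, mul_zero]

/-- A (not necessarily directed) cycle in the multiquiver with incidence matrix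
`γ`: `n ≥ 2` distinct vertices `v i` and distinct edges `e i`, with `e i`
incident to `v i` and `v (i+1)` (indices mod `n`). -/
structure MQCycle {V E : Type*} (γ : E → V → ℤ) where
  n : ℕ
  hn : 2 ≤ n
  v : ZMod n → V
  e : ZMod n → E
  hv : Function.Injective v
  he : Function.Injective e
  h1 : ∀ i, γ (e i) (v i) ≠ 0
  h2 : ∀ i, γ (e i) (v (i + 1)) ≠ 0

/-- A cycle is balanced if the product of the multiplicities at its sources
equals the product of the multiplicities at its targets. -/
def MQCycle.Balanced {V E : Type*} {γ : E → V → ℤ} (c : MQCycle γ) : Prop :=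
  haveI : NeZero c.n := ⟨by have := c.hn; omega⟩
  ∏ i : ZMod c.n, (γ (c.e i) (c.v i)).natAbs = ∏ i : ZMod c.n, (γ (c.e i) (c.v (i + 1))).natAbs

/-- The setoid on vertices whose classes are the connected components. -/
def mqSetoid {V E : Type*} (γ : E → V → ℤ) : Setoid V :=
  ⟨Relation.EqvGen (MQAdj γ), Relation.EqvGen.is_equivalence _⟩

/-- The edge `e` is a leaf at the component `C`: exactly one vertex is incident
to `e`, and that vertex lies in `C`. -/
def LeafAt {V E : Type*} (γ : E → V → ℤ) (C : Quotient (mqSetoid γ)) (e : E) : Prop :=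
  (∃! v : V, γ e v ≠ 0) ∧ ∀ v : V, γ e v ≠ 0 → Quotient.mk (mqSetoid γ) v = C

/-- A connected component is in equilibrium if no edge is a leaf at it and every
cycle all of whose vertices lie in it is balanced. -/
def InEquilibrium {V E : Type*} (γ : E → V → ℤ) (C : Quotient (mqSetoid γ)) : Prop :=
  (∀ e : E, ¬ LeafAt γ C e) ∧
    ∀ c : MQCycle γ, (∀ i, Quotient.mk (mqSetoid γ) (c.v i) = C) → c.Balanced

section Aux
variable {V E : Type*} {γ : E → V → ℤ}

/-- Distinct endpoints of an edge have entries of opposite signs. -/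
lemma Aux.opp (hM : CondM γ) {e : E} {v w : V} (hv : γ e v ≠ 0) (hw : γ e w ≠ 0)
    (hvw : v ≠ w) : γ e v * γ e w < 0 := by
  rcases lt_or_gt_of_ne hv with h1 | h1 <;> rcases lt_or_gt_of_ne hw with h2 | h2
  · exact absurd ((hM e).2 v w h1 h2) hvw
  · exact mul_neg_of_neg_of_pos h1 h2
  · exact mul_neg_of_pos_of_neg h1 h2
  · exact absurd ((hM e).1 v w h1 h2) hvw

/-- An edge incident to two distinct vertices is incident to no other vertex. -/
lemma Aux.support_sub (hM : CondM γ) {e : E} {v w : V} (hv : γ e v ≠ 0) (hw : γ e w ≠ 0)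
    (hvw : v ≠ w) : ∀ u, γ e u ≠ 0 → u = v ∨ u = w := by
  intro u hu
  rcases lt_or_gt_of_ne hu with h1 | h1
  · rcases lt_or_gt_of_ne hv with h2 | h2
    · exact Or.inl ((hM e).2 u v h1 h2)
    · rcases lt_or_gt_of_ne hw with h3 | h3
      · exact Or.inr ((hM e).2 u w h1 h3)
      · exact absurd ((hM e).1 v w h2 h3) hvw
  · rcases lt_or_gt_of_ne hv with h2 | h2
    · rcases lt_or_gt_of_ne hw with h3 | h3
      · exact absurd ((hM e).2 v w h2 h3) hvw
      · exact Or.inr ((hM e).1 u w h1 h3)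
    · exact Or.inl ((hM e).1 u v h1 h2)

variable [Fintype V]

/-- A kernel element satisfies the two–endpoint relation along each edge. -/
lemma Aux.ker_edge (hM : CondM γ) {d : V → ℚ} (hd : d ∈ kerGamma γ) {e : E} {v w : V}
    (hv : γ e v ≠ 0) (hw : γ e w ≠ 0) (hvw : v ≠ w) :
    (|γ e v| : ℚ) * d v = (|γ e w| : ℚ) * d w := by
  classical
  have hsum := hd e
  have hzero : ∀ u ∈ Finset.univ, u ∉ ({v, w} : Finset V) → (γ e u : ℚ) * d u = 0 := by
    intro u _ hu
    by_cases h : γ e u = 0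
    · simp [h]
    · rcases Aux.support_sub hM hv hw hvw u h with rfl | rfl <;> simp at hu
  have h2 : ∑ u ∈ ({v, w} : Finset V), (γ e u : ℚ) * d u = 0 := by
    rw [Finset.sum_subset (Finset.subset_univ _) hzero]; exact hsum
  rw [Finset.sum_pair hvw] at h2
  have hopp := Aux.opp hM hv hw hvw
  rcases lt_or_gt_of_ne hv with h1 | h1 <;> rcases lt_or_gt_of_ne hw with h3 | h3
  · exfalso; nlinarith
  · rw [abs_of_neg (show (γ e v : ℚ) < 0 by exact_mod_cast h1),
      abs_of_pos (show (0:ℚ) < γ e w by exact_mod_cast h3)]; linarith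
  · rw [abs_of_pos (show (0:ℚ) < γ e v by exact_mod_cast h1),
      abs_of_neg (show (γ e w : ℚ) < 0 by exact_mod_cast h3)]; linarith
  · exfalso; nlinarith

/-- A kernel element vanishes at the unique endpoint of a leaf edge. -/
lemma Aux.ker_leaf {d : V → ℚ} (hd : d ∈ kerGamma γ) {e : E} {v : V}
    (hv : γ e v ≠ 0) (huniq : ∀ u, γ e u ≠ 0 → u = v) : d v = 0 := by
  classical
  have hsum := hd e
  have hzero : ∀ u ∈ Finset.univ, u ∉ ({v} : Finset V) → (γ e u : ℚ) * d u = 0 := by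
    intro u _ hu
    by_cases h : γ e u = 0
    · simp [h]
    · exact absurd (huniq u h) (by simpa using hu)
  have h2 : ∑ u ∈ ({v} : Finset V), (γ e u : ℚ) * d u = 0 := by
    rw [Finset.sum_subset (Finset.subset_univ _) hzero]; exact hsum
  simp only [Finset.sum_singleton] at h2
  have : (γ e v : ℚ) ≠ 0 := by exact_mod_cast hv
  exact (mul_eq_zero.mp h2).resolve_left this

end Aux
section Walks
variable {V E : Type*}

/-- Walks in the multiquiver: each step uses an edge incident to two distinct
vertices. -/
inductive MQWalk (γ : E → V → ℤ) : V → V → Type _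
  | nil (v : V) : MQWalk γ v v
  | cons {v w x : V} (e : E) (hv : γ e v ≠ 0) (hw : γ e w ≠ 0) (hvw : v ≠ w)
      (p : MQWalk γ w x) : MQWalk γ v x

namespace MQWalk
variable {γ : E → V → ℤ}

def length : ∀ {v w : V}, MQWalk γ v w → ℕ
  | _, _, nil _ => 0
  | _, _, cons _ _ _ _ p => p.length + 1

def supp : ∀ {v w : V}, MQWalk γ v w → List V
  | v, _, nil _ => [v]
  | v, _, cons _ _ _ _ p => v :: p.supp

noncomputable def rho : ∀ {v w : V}, MQWalk γ v w → ℚ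
  | _, _, nil _ => 1
  | _, _, @cons _ _ _ v w _ e _ _ _ p => |(γ e v : ℚ)| / |(γ e w : ℚ)| * p.rho

def append : ∀ {u v w : V}, MQWalk γ u v → MQWalk γ v w → MQWalk γ u w
  | _, _, _, nil _, q => q
  | _, _, _, cons e hv hw hvw p, q => cons e hv hw hvw (p.append q)

def reverse : ∀ {u v : V}, MQWalk γ u v → MQWalk γ v u
  | _, _, nil v => nil v
  | _, _, cons e hv hw hvw p => p.reverse.append (cons e hw hv hvw.symm (nil _))

@[simp] lemma length_nil {v : V} : (nil v : MQWalk γ v v).length = 0 := rfl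
@[simp] lemma length_cons {v w x : V} (e : E) (hv : γ e v ≠ 0) (hw : γ e w ≠ 0)
    (hvw : v ≠ w) (p : MQWalk γ w x) : (cons e hv hw hvw p).length = p.length + 1 := rfl
@[simp] lemma supp_nil {v : V} : (nil v : MQWalk γ v v).supp = [v] := rfl
@[simp] lemma supp_cons {v w x : V} (e : E) (hv : γ e v ≠ 0) (hw : γ e w ≠ 0)
    (hvw : v ≠ w) (p : MQWalk γ w x) : (cons e hv hw hvw p).supp = v :: p.supp := rfl
@[simp] lemma rho_nil {v : V} : (nil v : MQWalk γ v v).rho = 1 := rfl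
@[simp] lemma rho_cons {v w x : V} (e : E) (hv : γ e v ≠ 0) (hw : γ e w ≠ 0)
    (hvw : v ≠ w) (p : MQWalk γ w x) :
    (cons e hv hw hvw p).rho = |(γ e v : ℚ)| / |(γ e w : ℚ)| * p.rho := rfl

lemma supp_ne_nil : ∀ {v w : V} (p : MQWalk γ v w), p.supp ≠ []
  | _, _, nil _ => by simp
  | _, _, cons _ _ _ _ _ => by simp

lemma length_supp : ∀ {v w : V} (p : MQWalk γ v w), p.supp.length = p.length + 1
  | _, _, nil _ => rfl
  | _, _, cons _ _ _ _ p => by simp [length_supp p]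

lemma start_mem_supp : ∀ {v w : V} (p : MQWalk γ v w), v ∈ p.supp
  | _, _, nil _ => by simp
  | _, _, cons _ _ _ _ _ => by simp

lemma end_mem_supp : ∀ {v w : V} (p : MQWalk γ v w), w ∈ p.supp
  | _, _, nil _ => by simp
  | _, _, cons _ _ _ _ p => by simp [end_mem_supp p]

lemma rho_pos : ∀ {v w : V} (p : MQWalk γ v w), 0 < p.rho
  | _, _, nil _ => one_pos
  | _, _, @cons _ _ _ v w _ e hv hw _ p => by
    have h1 : (0:ℚ) < |(γ e v : ℚ)| := abs_pos.mpr (by exact_mod_cast hv)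
    have h2 : (0:ℚ) < |(γ e w : ℚ)| := abs_pos.mpr (by exact_mod_cast hw)
    exact mul_pos (div_pos h1 h2) (rho_pos p)

@[simp] lemma length_append : ∀ {u v w : V} (p : MQWalk γ u v) (q : MQWalk γ v w),
    (p.append q).length = p.length + q.length
  | _, _, _, nil _, q => by simp [append]
  | _, _, _, cons e hv hw hvw p, q => by
    simp [append, length_append p q]; omega

@[simp] lemma rho_append : ∀ {u v w : V} (p : MQWalk γ u v) (q : MQWalk γ v w),
    (p.append q).rho = p.rho * q.rho
  | _, _, _, nil _, q => by simp [append]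
  | _, _, _, cons e hv hw hvw p, q => by
    simp [append, rho_append p q]; ring

@[simp] lemma rho_reverse : ∀ {u v : V} (p : MQWalk γ u v), p.reverse.rho = p.rho⁻¹
  | _, _, nil _ => by simp [reverse]
  | _, _, @cons _ _ _ v w _ e hv hw hvw p => by
    have h1 : |(γ e v : ℚ)| ≠ 0 := abs_ne_zero.mpr (by exact_mod_cast hv)
    have h2 : |(γ e w : ℚ)| ≠ 0 := abs_ne_zero.mpr (by exact_mod_cast hw)
    have h3 : p.rho ≠ 0 := (rho_pos p).ne'
    rw [reverse, rho_append, rho_reverse p, rho_cons, rho_nil, mul_one, rho_cons, mul_inv, inv_div]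
    ring

lemma supp_append : ∀ {u v w : V} (p : MQWalk γ u v) (q : MQWalk γ v w),
    (p.append q).supp = p.supp.dropLast ++ q.supp
  | _, _, _, nil _, q => by simp [append]
  | _, _, _, cons e hv hw hvw p, q => by
    rw [append, supp_cons, supp_cons, supp_append p q,
      List.dropLast_cons_of_ne_nil (supp_ne_nil p)]
    simp

lemma eqvGen_of_mem_supp : ∀ {v w : V} (p : MQWalk γ v w) (x : V), x ∈ p.supp →
    Relation.EqvGen (MQAdj γ) v x
  | _, _, nil v, x, hx => by
    simp at hx; exact hx ▸ Relation.EqvGen.refl _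
  | _, _, @cons _ _ _ v w _ e hv hw hvw p, x, hx => by
    rcases List.mem_cons.mp hx with rfl | hx
    · exact Relation.EqvGen.refl _
    · exact Relation.EqvGen.trans _ _ _
        (Relation.EqvGen.rel _ _ ⟨hvw, e, hv, hw⟩) (eqvGen_of_mem_supp p x hx)

lemma toEqvGen {v w : V} (p : MQWalk γ v w) : Relation.EqvGen (MQAdj γ) v w :=
  eqvGen_of_mem_supp p w (end_mem_supp p)

lemma of_eqvGen {v w : V} (h : Relation.EqvGen (MQAdj γ) v w) :
    Nonempty (MQWalk γ v w) := by
  induction h with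
  | rel a b hab => exact ⟨cons hab.2.choose hab.2.choose_spec.1 hab.2.choose_spec.2
      hab.1 (nil b)⟩
  | refl a => exact ⟨nil a⟩
  | symm a b _ ih => exact ⟨ih.some.reverse⟩
  | trans a b c _ _ ih1 ih2 => exact ⟨ih1.some.append ih2.some⟩

lemma length_pos_of_ne : ∀ {v w : V} (p : MQWalk γ v w), v ≠ w → 1 ≤ p.length
  | _, _, nil v, h => absurd rfl h
  | _, _, cons _ _ _ _ p, _ => by simp

end MQWalk
end Walks
section Walks2
variable {V E : Type*} {γ : E → V → ℤ}
namespace MQWalk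

/-- Kernel elements propagate along walks with factor `rho`. -/
lemma ker_prop [Fintype V] (hM : CondM γ) {d : V → ℚ} (hd : d ∈ kerGamma γ) :
    ∀ {v w : V} (p : MQWalk γ v w), d w = p.rho * d v
  | _, _, nil _ => by simp
  | _, _, @cons _ _ _ v w _ e hv hw hvw p => by
    have h2 : |(γ e w : ℚ)| ≠ 0 := abs_ne_zero.mpr (by exact_mod_cast hw)
    have hedge := Aux.ker_edge hM hd hv hw hvw
    have hdw : d w = |(γ e v : ℚ)| / |(γ e w : ℚ)| * d v := by
      field_simp
      linarith [hedge]
    rw [ker_prop hM hd p, hdw, rho_cons]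
    ring

/-- Split a walk at the first occurrence of a vertex `x` on it. -/
lemma split_first : ∀ {u w : V} (p : MQWalk γ u w) (x : V), x ∈ p.supp →
    ∃ (q : MQWalk γ u x) (r : MQWalk γ x w),
      q.length + r.length = p.length ∧ q.rho * r.rho = p.rho ∧
      p.supp = q.supp.dropLast ++ r.supp ∧
      x ∉ q.supp.dropLast ∧ (x ∈ p.supp.dropLast → 1 ≤ r.length)
  | u, _, nil _, x, hx => by
    simp only [supp_nil, List.mem_singleton] at hx
    subst hx
    exact ⟨nil x, nil x, by simp, by simp, by simp, by simp, by simp⟩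
  | u, _, @cons _ _ _ _ v _ e hv hw hvw p, x, hx => by
    classical
    by_cases hxu : x = u
    · subst hxu
      exact ⟨nil x, cons e hv hw hvw p, by simp, by simp, by simp, by simp,
        fun _ => by simp⟩
    · have hx' : x ∈ p.supp := by
        rcases List.mem_cons.mp hx with h | h
        · exact absurd h hxu
        · exact h
      obtain ⟨q, r, hlen, hrho, hsupp, hnmem, hlast⟩ := split_first p x hx'
      refine ⟨cons e hv hw hvw q, r, by simp only [length_cons]; omega, ?_, ?_, ?_, ?_⟩
      · rw [rho_cons, rho_cons, ← hrho]; ring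
      · rw [supp_cons, supp_cons, List.dropLast_cons_of_ne_nil (supp_ne_nil q),
          hsupp]; simp
      · rw [supp_cons, List.dropLast_cons_of_ne_nil (supp_ne_nil q)]
        simp only [List.mem_cons]
        rintro (h | h)
        · exact hxu h
        · exact hnmem h
      · intro hmem
        apply hlast
        rw [supp_cons, List.dropLast_cons_of_ne_nil (supp_ne_nil p)] at hmem
        rcases List.mem_cons.mp hmem with h | h
        · exact absurd h hxu
        · exact h

/-- Split off a closed subwalk at a vertex `x ≠ w` occurring twice. -/
lemma split_closed [DecidableEq V] {u w : V} (p : MQWalk γ u w) (x : V)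
    (h2 : 2 ≤ p.supp.count x) (hxw : x ≠ w) :
    ∃ (q : MQWalk γ x x) (r : MQWalk γ u w),
      1 ≤ q.length ∧ q.length + r.length = p.length ∧ 1 ≤ r.length ∧
      q.rho * r.rho = p.rho ∧ Relation.EqvGen (MQAdj γ) u x := by
  classical
  have hx : x ∈ p.supp := List.count_pos_iff.mp (by omega)
  obtain ⟨q₁, r₁, hlen₁, hrho₁, hsupp₁, hnmem₁, _⟩ := split_first p x hx
  have hcount : 2 ≤ r₁.supp.count x := by
    have : p.supp.count x = q₁.supp.dropLast.count x + r₁.supp.count x := by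
      rw [hsupp₁, List.count_append]
    have hz : q₁.supp.dropLast.count x = 0 := List.count_eq_zero.mpr hnmem₁
    omega
  cases r₁ with
  | nil => exact absurd rfl hxw
  | cons e h1 h2' hne r₂ =>
    rename_i y _
    have hxr : x ∈ r₂.supp := by
      have : (cons e h1 h2' hne r₂).supp.count x = 1 + r₂.supp.count x := by
        rw [supp_cons, List.count_cons_self]
        omega
      refine List.count_pos_iff.mp ?_
      omega
    obtain ⟨q₃, r₃, hlen₃, hrho₃, _, _, _⟩ := split_first r₂ x hxr
    have hr₃ : 1 ≤ r₃.length := length_pos_of_ne r₃ hxw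
    refine ⟨cons e h1 h2' hne q₃, q₁.append r₃, by simp, ?_, ?_, ?_, toEqvGen q₁⟩
    · simp only [length_cons, length_append] at *
      omega
    · simp only [length_append]
      omega
    · rw [rho_cons, rho_append, ← hrho₁, rho_cons, ← hrho₃]
      ring

end MQWalk
end Walks2
section Walks3
variable {V E : Type*} {γ : E → V → ℤ}
namespace MQWalk

/-- The `k`-th vertex along a walk (the endpoint for `k ≥ length`). -/
def vtx : ∀ {u w : V}, MQWalk γ u w → ℕ → V
  | u, _, nil _, _ => u
  | u, _, cons _ _ _ _ _, 0 => u
  | _, _, cons _ _ _ _ p, k + 1 => p.vtx k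

/-- The `k`-th edge along a walk (a default for `k ≥ length`). -/
def edg : ∀ {u w : V}, MQWalk γ u w → E → ℕ → E
  | _, _, nil _, d, _ => d
  | _, _, cons e _ _ _ _, _, 0 => e
  | _, _, cons _ _ _ _ p, d, k + 1 => p.edg d k

@[simp] lemma vtx_zero : ∀ {u w : V} (p : MQWalk γ u w), p.vtx 0 = u
  | _, _, nil _ => rfl
  | _, _, cons _ _ _ _ _ => rfl

lemma vtx_of_le : ∀ {u w : V} (p : MQWalk γ u w) {k : ℕ}, p.length ≤ k → p.vtx k = w
  | _, _, nil _, _, _ => rfl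
  | _, _, cons _ _ _ _ p, k + 1, h => vtx_of_le p (by simpa using h)
  | _, _, cons _ _ _ _ p, 0, h => by simp at h

lemma inc1 : ∀ {u w : V} (p : MQWalk γ u w) (d : E) {k : ℕ}, k < p.length →
    γ (p.edg d k) (p.vtx k) ≠ 0
  | _, _, cons e hv _ _ _, d, 0, _ => hv
  | _, _, cons _ _ _ _ p, d, k + 1, h => inc1 p d (by simpa using h)

lemma inc2 : ∀ {u w : V} (p : MQWalk γ u w) (d : E) {k : ℕ}, k < p.length →
    γ (p.edg d k) (p.vtx (k + 1)) ≠ 0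
  | _, _, @cons _ _ _ _ v _ e _ hw _ p, d, 0, _ => by
    show γ e (p.vtx 0) ≠ 0
    rw [vtx_zero]; exact hw
  | _, _, cons _ _ _ _ p, d, k + 1, h => inc2 p d (by simpa using h)

lemma step_ne : ∀ {u w : V} (p : MQWalk γ u w) {k : ℕ}, k < p.length →
    p.vtx k ≠ p.vtx (k + 1)
  | _, _, @cons _ _ _ u v _ e _ _ hvw p, 0, _ => by
    show u ≠ p.vtx 0
    rw [vtx_zero]; exact hvw
  | _, _, cons _ _ _ _ p, k + 1, h => step_ne p (by simpa using h)

lemma vtx_eq_get : ∀ {u w : V} (p : MQWalk γ u w) (k : ℕ) (h : k < p.supp.length),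
    p.vtx k = p.supp[k]
  | _, _, nil _, 0, _ => rfl
  | _, _, nil _, k + 1, h => by simp [supp_nil] at h
  | _, _, cons _ _ _ _ p, 0, _ => rfl
  | _, _, cons _ _ _ _ p, k + 1, h => by
    simpa [vtx] using vtx_eq_get p k (by simpa using h)

/-- `rho` as a quotient of products of multiplicities. -/
lemma rho_prod : ∀ {u w : V} (p : MQWalk γ u w) (d : E),
    p.rho * ∏ k ∈ Finset.range p.length, |(γ (p.edg d k) (p.vtx (k + 1)) : ℚ)| =
      ∏ k ∈ Finset.range p.length, |(γ (p.edg d k) (p.vtx k) : ℚ)|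
  | _, _, nil _, d => by simp
  | _, _, @cons _ _ _ u v _ e hv hw hvw p, d => by
    have IH := rho_prod p d
    have hb : |(γ e v : ℚ)| ≠ 0 := abs_ne_zero.mpr (by exact_mod_cast hw)
    rw [length_cons, Finset.prod_range_succ', Finset.prod_range_succ']
    have e1 : ∀ k, (cons e hv hw hvw p).edg d (k + 1) = p.edg d k := fun _ => rfl
    have e2 : ∀ k, (cons e hv hw hvw p).vtx (k + 1) = p.vtx k := fun _ => rfl
    have e3 : (cons e hv hw hvw p).edg d 0 = e := rfl
    have e4 : (cons e hv hw hvw p).vtx 0 = u := rfl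
    simp only [e1, e2, e3, e4, vtx_zero, rho_cons]
    rw [← IH]
    field_simp
end MQWalk

/-- Products over `ZMod n` versus products over `Finset.range n`. -/
lemma Aux.prod_zmod {M : Type*} [CommMonoid M] (n : ℕ) [NeZero n] (f : ℕ → M) :
    ∏ i : ZMod n, f (ZMod.val i) = ∏ k ∈ Finset.range n, f k := by
  refine Finset.prod_nbij' (fun i => ZMod.val i) (fun k => (k : ZMod n)) ?_ ?_ ?_ ?_ ?_
  · intro i _; exact Finset.mem_range.mpr (ZMod.val_lt i)
  · intro k _; exact Finset.mem_univ _
  · intro i _; exact ZMod.natCast_rightInverse i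
  · intro k hk; exact ZMod.val_cast_of_lt (Finset.mem_range.mp hk)
  · intro i _; rfl

end Walks3
section Key
variable {V E : Type*} {γ : E → V → ℤ}

open MQWalk

lemma MQWalk.edge_nonempty : ∀ {u w : V} (p : MQWalk γ u w), 1 ≤ p.length → Nonempty E
  | _, _, nil _, h => by simp at h
  | _, _, cons e _ _ _ _, _ => ⟨e⟩

/-- Key lemma: if all cycles inside the component `C` are balanced, then every
closed walk inside `C` has ratio `1`. -/
lemma Aux.closed_rho (hM : CondM γ) {C : Quotient (mqSetoid γ)}
    (hbal : ∀ c : MQCycle γ, (∀ i, Quotient.mk (mqSetoid γ) (c.v i) = C) → c.Balanced)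
    (n : ℕ) : ∀ {u : V}, Quotient.mk (mqSetoid γ) u = C →
      ∀ p : MQWalk γ u u, p.length = n → p.rho = 1 := by
  classical
  induction n using Nat.strong_induction_on with
  | _ n IH =>
  intro u hu p hlen
  by_cases hnd : p.supp.dropLast.Nodup
  · -- no repeated vertices: either trivial, a doubled edge, or a genuine cycle
    match n, hlen with
    | 0, hlen =>
      cases p with
      | nil => simp
      | cons e hv hw hvw p' => simp [length_cons] at hlen
    | 1, hlen =>
      cases p with
      | nil => simp
      | cons e hv hw hvw p' =>
        exfalso
        cases p' with
        | nil => exact hvw rfl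
        | cons e' hv' hw' hvw' p'' => simp [length_cons] at hlen
    | (m + 2), hlen =>
      obtain ⟨d₀⟩ : Nonempty E := p.edge_nonempty (by omega)
      -- injectivity of vertices from Nodup
      have hsl : p.supp.length = p.length + 1 := length_supp p
      have hdl : p.supp.dropLast.length = p.length := by
        rw [List.length_dropLast, hsl]; omega
      have hinj : ∀ i j, i < p.length → j < p.length → p.vtx i = p.vtx j → i = j := by
        intro i j hi hj hij
        have h1 : p.vtx i = p.supp.dropLast[i]'(by omega) := by
          rw [List.getElem_dropLast]; exact vtx_eq_get p i (by omega)
        have h2 : p.vtx j = p.supp.dropLast[j]'(by omega) := by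
          rw [List.getElem_dropLast]; exact vtx_eq_get p j (by omega)
        have hget : p.supp.dropLast[i]'(by omega) = p.supp.dropLast[j]'(by omega) := by
          rw [← h1, ← h2]; exact hij
        have := List.nodup_iff_injective_getElem.mp hnd
          (a₁ := ⟨i, by omega⟩) (a₂ := ⟨j, by omega⟩) hget
        simpa using congrArg Fin.val this
      have hvtxlast : p.vtx p.length = u := vtx_of_le p le_rfl
      by_cases hed : ∃ i j, i < p.length ∧ j < p.length ∧ i < j ∧ p.edg d₀ i = p.edg d₀ j
      · -- doubled edge: forces n = 2 with e₀ = e₁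
        obtain ⟨i, j, hi, hj, hij, he⟩ := hed
        have hvi : γ (p.edg d₀ i) (p.vtx i) ≠ 0 := inc1 p d₀ hi
        have hvi1 : γ (p.edg d₀ i) (p.vtx (i + 1)) ≠ 0 := inc2 p d₀ hi
        have hne : p.vtx i ≠ p.vtx (i + 1) := step_ne p hi
        have hvj : γ (p.edg d₀ i) (p.vtx j) ≠ 0 := he ▸ inc1 p d₀ hj
        have hvj1 : γ (p.edg d₀ i) (p.vtx (j + 1)) ≠ 0 := he ▸ inc2 p d₀ hj
        have hj1 : j = i + 1 := by
          rcases Aux.support_sub hM hvi hvi1 hne _ hvj with h | h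
          · exact absurd (hinj _ _ hj hi h) (by omega)
          · -- vtx j = vtx (i+1)
            by_cases hi1 : i + 1 < p.length
            · exact hinj _ _ hj hi1 h
            · exfalso
              have : i + 1 = p.length := by omega
              have h0 : p.vtx j = p.vtx 0 := by
                rw [h, this, hvtxlast, vtx_zero]
              have := hinj _ _ hj (by omega) h0
              omega
        have hin : j + 1 = p.length ∧ i = 0 := by
          rcases Aux.support_sub hM hvi hvi1 hne _ hvj1 with h | h
          · by_cases hj2 : j + 1 < p.length
            · have := hinj _ _ hj2 hi h
              omega
            · have hj2' : j + 1 = p.length := by omega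
              have h0 : p.vtx i = p.vtx 0 := by rw [← h, hj2', hvtxlast, vtx_zero]
              have := hinj _ _ hi (by omega) h0
              omega
          · exfalso
            have hcon : p.vtx (j + 1) = p.vtx j := by rw [h, hj1]
            exact step_ne p hj hcon.symm
        have hn2 : p.length = 2 := by omega
        have hi0 : i = 0 := hin.2
        have hj1' : j = 1 := by omega
        -- compute rho directly from rho_prod
        have hrp := rho_prod p d₀
        rw [hn2] at hrp
        simp only [Finset.prod_range_succ, Finset.prod_range_zero, one_mul] at hrp
        have hee : p.edg d₀ 1 = p.edg d₀ 0 := by rw [← hi0, ← hj1'] at *; exact he.symm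
        have hv2 : p.vtx 2 = p.vtx 0 := by
          rw [show (2:ℕ) = p.length from hn2.symm, hvtxlast, vtx_zero]
        rw [hee, hv2] at hrp
        have hX : |(γ (p.edg d₀ 0) (p.vtx 1) : ℚ)| * |(γ (p.edg d₀ 0) (p.vtx 0) : ℚ)| ≠ 0 := by
          have h1 : γ (p.edg d₀ 0) (p.vtx 1) ≠ 0 := inc2 p d₀ (by omega)
          have h2 : γ (p.edg d₀ 0) (p.vtx 0) ≠ 0 := inc1 p d₀ (by omega)
          positivity
        have hfin : p.rho * (|(γ (p.edg d₀ 0) (p.vtx 1) : ℚ)| * |(γ (p.edg d₀ 0) (p.vtx 0) : ℚ)|)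
            = 1 * (|(γ (p.edg d₀ 0) (p.vtx 1) : ℚ)| * |(γ (p.edg d₀ 0) (p.vtx 0) : ℚ)|) := by
          rw [one_mul]
          linear_combination hrp
        exact mul_right_cancel₀ hX hfin
      · -- a genuine cycle
        push_neg at hed
        haveI : NeZero p.length := ⟨by omega⟩
        have hval1 : (1 : ZMod p.length).val = 1 := by
          have : ((1 : ℕ) : ZMod p.length).val = 1 := ZMod.val_cast_of_lt (by omega)
          simpa using this
        have hvadd : ∀ i : ZMod p.length, (i + 1).val = (i.val + 1) % p.length := by
          intro i
          rw [ZMod.val_add, hval1]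
        set c : MQCycle γ :=
          { n := p.length
            hn := by omega
            v := fun i => p.vtx i.val
            e := fun i => p.edg d₀ i.val
            hv := by
              intro i j hij
              exact ZMod.val_injective _ (hinj _ _ (ZMod.val_lt i) (ZMod.val_lt j) hij)
            he := by
              intro i j hij
              by_contra hne
              rcases Nat.lt_or_ge i.val j.val with h | h
              · exact hed i.val j.val (ZMod.val_lt i) (ZMod.val_lt j) h hij
              · have h' : j.val < i.val := by
                  rcases Nat.lt_or_ge j.val i.val with h' | h'
                  · exact h'
                  · exact absurd (ZMod.val_injective _ (by omega : i.val = j.val)) hne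
                exact hed j.val i.val (ZMod.val_lt j) (ZMod.val_lt i) h' hij.symm
            h1 := fun i => inc1 p d₀ (ZMod.val_lt i)
            h2 := by
              intro i
              show γ (p.edg d₀ i.val) (p.vtx ((i + 1).val)) ≠ 0
              rw [hvadd i]
              by_cases h : i.val + 1 < p.length
              · rw [Nat.mod_eq_of_lt h]; exact inc2 p d₀ (ZMod.val_lt i)
              · have hiv : i.val + 1 = p.length := by have := ZMod.val_lt i; omega
                rw [hiv, Nat.mod_self, vtx_zero]
                have h0 := inc2 p d₀ (ZMod.val_lt i)
                rwa [hiv, hvtxlast] at h0 } with hc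
        have hmemC : ∀ i : ZMod p.length, Quotient.mk (mqSetoid γ) (c.v i) = C := by
          intro i
          have hmem : c.v i ∈ p.supp := by
            have hvlt : i.val < p.supp.length := by rw [hsl]; have := ZMod.val_lt i; omega
            have hcv : c.v i = p.supp[i.val] := vtx_eq_get p i.val hvlt
            rw [hcv]
            exact List.getElem_mem hvlt
          have := eqvGen_of_mem_supp p _ hmem
          rw [← hu]
          exact (Quotient.sound this).symm
        have hB := hbal c hmemC
        have hA : (∏ i : ZMod p.length, |(γ (c.e i) (c.v i) : ℚ)|) =
            ∏ k ∈ Finset.range p.length, |(γ (p.edg d₀ k) (p.vtx k) : ℚ)| :=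
          Aux.prod_zmod p.length (fun k => |(γ (p.edg d₀ k) (p.vtx k) : ℚ)|)
        have hBq : (∏ i : ZMod p.length, |(γ (c.e i) (c.v i) : ℚ)|) =
            ∏ i : ZMod p.length, |(γ (c.e i) (c.v (i + 1)) : ℚ)| := by
          have habs : ∀ (e : E) (v : V), |(γ e v : ℚ)| = (((γ e v).natAbs : ℕ) : ℚ) := by
            intro e v; rw [Nat.cast_natAbs, Int.cast_abs]
          simp only [habs]
          rw [← Nat.cast_prod, ← Nat.cast_prod]
          exact congrArg _ hB
        have hB2 : (∏ i : ZMod p.length, |(γ (c.e i) (c.v (i + 1)) : ℚ)|) =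
            ∏ k ∈ Finset.range p.length, |(γ (p.edg d₀ k) (p.vtx ((k + 1) % p.length)) : ℚ)| := by
          rw [← Aux.prod_zmod p.length
            (fun k => |(γ (p.edg d₀ k) (p.vtx ((k + 1) % p.length)) : ℚ)|)]
          refine Finset.prod_congr rfl ?_
          intro i _
          have hcv : c.v (i + 1) = p.vtx ((i.val + 1) % p.length) := by
            show p.vtx ((i + 1).val) = _
            rw [hvadd i]
          rw [hcv]
        have hmod : ∀ k ∈ Finset.range p.length,
            |(γ (p.edg d₀ k) (p.vtx ((k + 1) % p.length)) : ℚ)| =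
              |(γ (p.edg d₀ k) (p.vtx (k + 1)) : ℚ)| := by
          intro k hk
          rcases Nat.lt_or_ge (k + 1) p.length with h | h
          · rw [Nat.mod_eq_of_lt h]
          · have hk' : k + 1 = p.length := by
              have := Finset.mem_range.mp hk; omega
            rw [hk', Nat.mod_self, vtx_zero, hvtxlast]
        have key : (∏ k ∈ Finset.range p.length, |(γ (p.edg d₀ k) (p.vtx k) : ℚ)|) =
            ∏ k ∈ Finset.range p.length, |(γ (p.edg d₀ k) (p.vtx (k + 1)) : ℚ)| :=
          calc _ = ∏ i : ZMod p.length, |(γ (c.e i) (c.v i) : ℚ)| := hA.symm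
          _ = ∏ i : ZMod p.length, |(γ (c.e i) (c.v (i + 1)) : ℚ)| := hBq
          _ = ∏ k ∈ Finset.range p.length,
              |(γ (p.edg d₀ k) (p.vtx ((k + 1) % p.length)) : ℚ)| := hB2
          _ = _ := Finset.prod_congr rfl hmod
        have hBne : (∏ k ∈ Finset.range p.length, |(γ (p.edg d₀ k) (p.vtx (k + 1)) : ℚ)|) ≠ 0 := by
          refine Finset.prod_ne_zero_iff.mpr ?_
          intro k hk
          have h0 := inc2 p d₀ (Finset.mem_range.mp hk)
          exact abs_ne_zero.mpr (by exact_mod_cast h0)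
        have hfin : p.rho * (∏ k ∈ Finset.range p.length,
            |(γ (p.edg d₀ k) (p.vtx (k + 1)) : ℚ)|) = 1 * (∏ k ∈ Finset.range p.length,
            |(γ (p.edg d₀ k) (p.vtx (k + 1)) : ℚ)|) := by
          rw [one_mul, rho_prod p d₀, key]
        exact mul_right_cancel₀ hBne hfin
  · -- repeated vertex: split into two shorter closed walks
    obtain ⟨x, hdup⟩ := List.exists_duplicate_iff_not_nodup.mpr hnd
    have hcnt : 2 ≤ p.supp.count x :=
      le_trans (List.duplicate_iff_two_le_count.mp hdup)
        ((List.dropLast_sublist _).count_le x)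
    by_cases hxu : x = u
    · subst hxu
      cases p with
      | nil => simp at hdup
      | cons e hv hw hvw p' =>
        rename_i w'
        have hdl : (cons e hv hw hvw p').supp.dropLast = x :: p'.supp.dropLast := by
          rw [supp_cons, List.dropLast_cons_of_ne_nil (supp_ne_nil p')]
        have hxmem : x ∈ p'.supp.dropLast := by
          rw [hdl] at hdup
          have h2 := List.duplicate_iff_two_le_count.mp hdup
          rw [List.count_cons_self] at h2
          exact List.count_pos_iff.mp (by omega)
        have hxsupp : x ∈ p'.supp := (List.dropLast_sublist _).mem hxmem
        obtain ⟨q₁, r₁, hlen₁, hrho₁, _, _, hlast₁⟩ := split_first p' x hxsupp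
        have hr₁ : 1 ≤ r₁.length := hlast₁ hxmem
        have h1 : (cons e hv hw hvw q₁).rho = 1 := by
          refine IH ((cons e hv hw hvw q₁).length) ?_ hu _ rfl
          rw [← hlen, length_cons, length_cons]
          omega
        have h2 : r₁.rho = 1 := by
          refine IH r₁.length ?_ hu _ rfl
          rw [← hlen, length_cons]
          omega
        rw [rho_cons] at h1 ⊢
        calc |(γ e x : ℚ)| / |(γ e w' : ℚ)| * p'.rho
            = |(γ e x : ℚ)| / |(γ e w' : ℚ)| * (q₁.rho * r₁.rho) := by rw [hrho₁]
          _ = (|(γ e x : ℚ)| / |(γ e w' : ℚ)| * q₁.rho) * r₁.rho := by ring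
          _ = 1 := by rw [h1, h2, one_mul]
    · obtain ⟨q, r, hq1, hqr, hr1, hrho, heqv⟩ := split_closed p x hcnt hxu
      have hxC : Quotient.mk (mqSetoid γ) x = C := by
        rw [← hu]; exact (Quotient.sound heqv).symm
      have h1 : q.rho = 1 := IH q.length (by omega) hxC q rfl
      have h2 : r.rho = 1 := IH r.length (by omega) hu r rfl
      rw [← hrho, h1, h2, one_mul]

end Key
section Phi
variable {V E : Type*} {γ : E → V → ℤ}
open MQWalk

/-- The canonical kernel vector supported on the component `C`. -/
noncomputable def Aux.phi (γ : E → V → ℤ) (C : Quotient (mqSetoid γ)) (w : V) : ℚ :=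
  letI := Classical.dec (Quotient.mk (mqSetoid γ) w = C)
  if h : Quotient.mk (mqSetoid γ) w = C then
    (MQWalk.of_eqvGen (γ := γ)
      (Quotient.exact (show Quotient.mk (mqSetoid γ) C.out = Quotient.mk (mqSetoid γ) w by
        rw [h]; exact Quotient.out_eq C))).some.rho
  else 0

lemma Aux.phi_eq_rho {C : Quotient (mqSetoid γ)} {w : V}
    (h : Quotient.mk (mqSetoid γ) w = C)
    (heq : Relation.EqvGen (MQAdj γ) C.out w) :
    Aux.phi γ C w = (MQWalk.of_eqvGen heq).some.rho := by
  rw [Aux.phi, dif_pos h]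

lemma Aux.phi_pos {C : Quotient (mqSetoid γ)} {w : V}
    (h : Quotient.mk (mqSetoid γ) w = C) : 0 < Aux.phi γ C w := by
  rw [Aux.phi, dif_pos h]
  exact rho_pos _

lemma Aux.phi_neg {C : Quotient (mqSetoid γ)} {w : V}
    (h : Quotient.mk (mqSetoid γ) w ≠ C) : Aux.phi γ C w = 0 := by
  rw [Aux.phi, dif_neg h]

lemma Aux.phi_out (hM : CondM γ) {C : Quotient (mqSetoid γ)} (hC : InEquilibrium γ C) :
    Aux.phi γ C C.out = 1 := by
  have hout : Quotient.mk (mqSetoid γ) C.out = C := Quotient.out_eq C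
  have heq : Relation.EqvGen (MQAdj γ) C.out C.out := Relation.EqvGen.refl _
  rw [Aux.phi_eq_rho hout heq]
  exact Aux.closed_rho hM hC.2 _ hout _ rfl

variable [Fintype V]

lemma Aux.phi_mem_ker (hM : CondM γ) {C : Quotient (mqSetoid γ)}
    (hC : InEquilibrium γ C) : Aux.phi γ C ∈ kerGamma γ := by
  classical
  intro e
  by_cases hex : ∃ v, γ e v ≠ 0
  · obtain ⟨v, hv⟩ := hex
    by_cases huniq : ∀ u, γ e u ≠ 0 → u = v
    · -- single-endpoint edge
      have hsum : ∑ u : V, (γ e u : ℚ) * Aux.phi γ C u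
          = (γ e v : ℚ) * Aux.phi γ C v := by
        refine Finset.sum_eq_single_of_mem v (Finset.mem_univ v) ?_
        intro u _ hne
        have : γ e u = 0 := by
          by_contra h0
          exact hne (huniq u h0)
        simp [this]
      rw [hsum]
      by_cases hvC : Quotient.mk (mqSetoid γ) v = C
      · exact absurd ⟨⟨v, hv, huniq⟩, fun u hu => (huniq u hu) ▸ hvC⟩ (hC.1 e)
      · rw [Aux.phi_neg hvC, mul_zero]
    · push_neg at huniq
      obtain ⟨w, hw, hwv⟩ := huniq
      have hvw : v ≠ w := Ne.symm hwv
      have hsum : ∑ u : V, (γ e u : ℚ) * Aux.phi γ C u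
          = (γ e v : ℚ) * Aux.phi γ C v + (γ e w : ℚ) * Aux.phi γ C w := by
        have hzero : ∀ u ∈ Finset.univ, u ∉ ({v, w} : Finset V) →
            (γ e u : ℚ) * Aux.phi γ C u = 0 := by
          intro u _ hu
          by_cases h0 : γ e u = 0
          · simp [h0]
          · rcases Aux.support_sub hM hv hw hvw u h0 with rfl | rfl <;> simp at hu
        calc ∑ u : V, (γ e u : ℚ) * Aux.phi γ C u
            = ∑ u ∈ ({v, w} : Finset V), (γ e u : ℚ) * Aux.phi γ C u :=
              (Finset.sum_subset (Finset.subset_univ _) hzero).symm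
          _ = _ := Finset.sum_pair hvw
      rw [hsum]
      have hadj : Relation.EqvGen (MQAdj γ) v w :=
        Relation.EqvGen.rel _ _ ⟨hvw, e, hv, hw⟩
      by_cases hvC : Quotient.mk (mqSetoid γ) v = C
      · have hwC : Quotient.mk (mqSetoid γ) w = C := by
          rw [← Quotient.sound hadj]; exact hvC
        have hEv : Relation.EqvGen (MQAdj γ) C.out v :=
          Quotient.exact (show Quotient.mk (mqSetoid γ) C.out = Quotient.mk (mqSetoid γ) v by
            rw [hvC]; exact Quotient.out_eq C)
        have hEw : Relation.EqvGen (MQAdj γ) C.out w :=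
          Quotient.exact (show Quotient.mk (mqSetoid γ) C.out = Quotient.mk (mqSetoid γ) w by
            rw [hwC]; exact Quotient.out_eq C)
        set Pv := (MQWalk.of_eqvGen hEv).some with hPv
        set Pw := (MQWalk.of_eqvGen hEw).some with hPw
        have hφv : Aux.phi γ C v = Pv.rho := Aux.phi_eq_rho hvC hEv
        have hφw : Aux.phi γ C w = Pw.rho := Aux.phi_eq_rho hwC hEw
        have hout : Quotient.mk (mqSetoid γ) C.out = C := Quotient.out_eq C
        have hQ : (Pv.append (cons e hv hw hvw Pw.reverse)).rho = 1 :=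
          Aux.closed_rho hM hC.2 _ hout _ rfl
        rw [rho_append, rho_cons, rho_reverse] at hQ
        have hPwpos : 0 < Pw.rho := rho_pos _
        have hPvpos : 0 < Pv.rho := rho_pos _
        have hb : |(γ e w : ℚ)| ≠ 0 := abs_ne_zero.mpr (by exact_mod_cast hw)
        have habs : |(γ e v : ℚ)| * Pv.rho = |(γ e w : ℚ)| * Pw.rho := by
          field_simp at hQ
          linear_combination hQ
        rw [hφv, hφw]
        have hopp := Aux.opp hM hv hw hvw
        rcases lt_or_gt_of_ne hv with h1 | h1 <;> rcases lt_or_gt_of_ne hw with h3 | h3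
        · exfalso; nlinarith
        · rw [abs_of_neg (show (γ e v : ℚ) < 0 by exact_mod_cast h1),
            abs_of_pos (show (0:ℚ) < γ e w by exact_mod_cast h3)] at habs
          linarith
        · rw [abs_of_pos (show (0:ℚ) < γ e v by exact_mod_cast h1),
            abs_of_neg (show (γ e w : ℚ) < 0 by exact_mod_cast h3)] at habs
          linarith
        · exfalso; nlinarith
      · have hwC : Quotient.mk (mqSetoid γ) w ≠ C := by
          intro h
          exact hvC (by rw [Quotient.sound hadj]; exact h)
        rw [Aux.phi_neg hvC, Aux.phi_neg hwC, mul_zero, mul_zero, add_zero]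
  · push_neg at hex
    refine Finset.sum_eq_zero ?_
    intro u _
    simp [hex u]

end Phi
section Final
variable {V E : Type*} {γ : E → V → ℤ} [Fintype V]
open MQWalk

lemma Aux.prop_zero (hM : CondM γ) {d : V → ℚ} (hd : d ∈ kerGamma γ) {x : V}
    (hx : d x = 0) {w : V} (hxw : Relation.EqvGen (MQAdj γ) x w) : d w = 0 := by
  obtain ⟨p⟩ := MQWalk.of_eqvGen hxw
  rw [ker_prop hM hd p, hx, mul_zero]

/-- A kernel element vanishes on any component which is not in equilibrium. -/
lemma Aux.vanish (hM : CondM γ) {C : Quotient (mqSetoid γ)} (hnE : ¬ InEquilibrium γ C)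
    {d : V → ℚ} (hd : d ∈ kerGamma γ) {w : V} (hwC : Quotient.mk (mqSetoid γ) w = C) :
    d w = 0 := by
  classical
  rw [InEquilibrium, not_and_or] at hnE
  rcases hnE with h | h
  · push_neg at h
    obtain ⟨e, hLeaf⟩ := h
    obtain ⟨⟨v, hv, huniq⟩, hin⟩ := hLeaf
    have hv0 : d v = 0 := Aux.ker_leaf hd hv fun u hu => huniq u hu
    have hvC : Quotient.mk (mqSetoid γ) v = C := hin v hv
    exact Aux.prop_zero hM hd hv0 (Quotient.exact (hvC.trans hwC.symm))
  · push_neg at h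
    obtain ⟨c, hcC, hnb⟩ := h
    haveI : NeZero c.n := ⟨by have := c.hn; omega⟩
    haveI : Fact (1 < c.n) := ⟨by have := c.hn; omega⟩
    have hne1 : ∀ i : ZMod c.n, c.v i ≠ c.v (i + 1) := by
      intro i hEq
      have h2 := c.hv hEq
      exact one_ne_zero (left_eq_add.mp h2)
    have hrel : ∀ i : ZMod c.n, |(γ (c.e i) (c.v i) : ℚ)| * d (c.v i)
        = |(γ (c.e i) (c.v (i + 1)) : ℚ)| * d (c.v (i + 1)) :=
      fun i => Aux.ker_edge hM hd (c.h1 i) (c.h2 i) (hne1 i)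
    by_cases hz : ∃ i : ZMod c.n, d (c.v i) = 0
    · obtain ⟨i, hi⟩ := hz
      exact Aux.prop_zero hM hd hi (Quotient.exact ((hcC i).trans hwC.symm))
    · exfalso
      push_neg at hz
      apply hnb
      have hprod : (∏ i : ZMod c.n, |(γ (c.e i) (c.v i) : ℚ)|) * ∏ i : ZMod c.n, d (c.v i)
          = (∏ i : ZMod c.n, |(γ (c.e i) (c.v (i + 1)) : ℚ)|) *
            ∏ i : ZMod c.n, d (c.v (i + 1)) := by
        rw [← Finset.prod_mul_distrib, ← Finset.prod_mul_distrib]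
        exact Finset.prod_congr rfl fun i _ => hrel i
      have hshift : (∏ i : ZMod c.n, d (c.v (i + 1))) = ∏ i : ZMod c.n, d (c.v i) :=
        Fintype.prod_equiv (Equiv.addRight (1 : ZMod c.n)) _ _ (fun i => rfl)
      have hdne : (∏ i : ZMod c.n, d (c.v i)) ≠ 0 :=
        Finset.prod_ne_zero_iff.mpr fun i _ => hz i
      rw [hshift] at hprod
      have habs : (∏ i : ZMod c.n, |(γ (c.e i) (c.v i) : ℚ)|)
          = ∏ i : ZMod c.n, |(γ (c.e i) (c.v (i + 1)) : ℚ)| :=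
        mul_right_cancel₀ hdne hprod
      show (∏ i : ZMod c.n, (γ (c.e i) (c.v i)).natAbs)
          = ∏ i : ZMod c.n, (γ (c.e i) (c.v (i + 1))).natAbs
      have hcast : ((∏ i : ZMod c.n, (γ (c.e i) (c.v i)).natAbs : ℕ) : ℚ)
          = ((∏ i : ZMod c.n, (γ (c.e i) (c.v (i + 1))).natAbs : ℕ) : ℚ) := by
        rw [Nat.cast_prod, Nat.cast_prod]
        calc ∏ i : ZMod c.n, ((γ (c.e i) (c.v i)).natAbs : ℚ)
            = ∏ i : ZMod c.n, |(γ (c.e i) (c.v i) : ℚ)| :=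
              Finset.prod_congr rfl fun i _ => by rw [Nat.cast_natAbs, Int.cast_abs]
          _ = ∏ i : ZMod c.n, |(γ (c.e i) (c.v (i + 1)) : ℚ)| := habs
          _ = _ := Finset.prod_congr rfl fun i _ => by rw [Nat.cast_natAbs, Int.cast_abs]
      exact_mod_cast hcast
end Final
/-- The dimension over `ℚ` of `ker γ` equals the number of connected components
of the multiquiver `Γ` that are in equilibrium. -/
theorem finrank_kerGamma_eq_card_equilibrium {V E : Type*} [Fintype V] [Fintype E]
    (γ : E → V → ℤ) (hM : CondM γ) :
    Module.finrank ℚ (kerGamma γ) =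
      Nat.card {C : Quotient (mqSetoid γ) // InEquilibrium γ C} := by
  classical
  haveI : Finite (Quotient (mqSetoid γ)) := Quotient.finite _
  haveI : Fintype {C : Quotient (mqSetoid γ) // InEquilibrium γ C} := Fintype.ofFinite _
  let T : kerGamma γ →ₗ[ℚ] ({C : Quotient (mqSetoid γ) // InEquilibrium γ C} → ℚ) :=
    { toFun := fun d C => (d : V → ℚ) C.1.out
      map_add' := fun a b => rfl
      map_smul' := fun m a => rfl }
  have hinj : Function.Injective T := by
    rw [injective_iff_map_eq_zero]
    intro d hd0
    have hzero : ∀ w : V, (d : V → ℚ) w = 0 := by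
      intro w
      by_cases hE : InEquilibrium γ (Quotient.mk (mqSetoid γ) w)
      · have hEq : Relation.EqvGen (MQAdj γ) ((Quotient.mk (mqSetoid γ) w).out) w :=
          Quotient.exact (show Quotient.mk (mqSetoid γ) ((Quotient.mk (mqSetoid γ) w).out)
            = Quotient.mk (mqSetoid γ) w from Quotient.out_eq _)
        obtain ⟨p⟩ := MQWalk.of_eqvGen hEq
        have h0 : (d : V → ℚ) ((Quotient.mk (mqSetoid γ) w).out) = 0 :=
          congrFun hd0 ⟨Quotient.mk (mqSetoid γ) w, hE⟩
        rw [MQWalk.ker_prop hM d.2 p, h0, mul_zero]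
      · exact Aux.vanish hM hE d.2 rfl
    exact Subtype.ext (funext hzero)
  have hsurj : Function.Surjective T := by
    intro cfun
    refine ⟨⟨∑ C : {C : Quotient (mqSetoid γ) // InEquilibrium γ C},
      cfun C • Aux.phi γ C.1, ?_⟩, ?_⟩
    · exact Submodule.sum_mem _ fun C _ => Submodule.smul_mem _ _ (Aux.phi_mem_ker hM C.2)
    · funext C
      show (∑ C' : {C : Quotient (mqSetoid γ) // InEquilibrium γ C},
        cfun C' • Aux.phi γ C'.1) C.1.out = cfun C
      rw [Finset.sum_apply]
      rw [Finset.sum_eq_single C]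
      · show cfun C • Aux.phi γ C.1 C.1.out = cfun C
        rw [Aux.phi_out hM C.2, smul_eq_mul, mul_one]
      · intro C' _ hne
        show (cfun C' • Aux.phi γ C'.1) C.1.out = 0
        have hne' : Quotient.mk (mqSetoid γ) C.1.out ≠ C'.1 := by
          rw [Quotient.out_eq]
          exact fun h => hne (Subtype.ext h.symm)
        rw [Pi.smul_apply, Aux.phi_neg hne', smul_zero]
      · intro h
        exact absurd (Finset.mem_univ C) h
  have hequiv := LinearEquiv.ofBijective T ⟨hinj, hsurj⟩
  rw [hequiv.finrank_eq, Module.finrank_fintype_fun_eq_card, Nat.card_eq_fintype_card]
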